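/- Let $H$ be a Hilbert space and $A : \mathcal{D}_{\max} \subseteq H \to H$ a closed operator with closed restrictions $A_{\mathcal{D}}$ to intermediate domains $\mathcal{D}_{\min} \subseteq \mathcal{D} \subseteq \mathcal{D}_{\max}$. Suppose $\dim \mathcal{D}_{\max}/\mathcal{D}_{\min} < \infty$ and $A_{\mathcal{D}_{\min}}$ is Fredholm. Then for every intermediate subspace $\mathcal{D}$, the operator $A_{\mathcal{D}}$ is Fredholm and $\mathrm{Ind}\, A_{\mathcal{D}} = \mathrm{Ind}\, A_{\mathcal{D}_{\min}} + \dim \mathcal{D}/\mathcal{D}_{\min}$. -/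
import Mathlib

open Module Submodule LinearMap

private lemma fd_of_sub_quot {K X : Type*} [Field K] [AddCommGroup X] [Module K X]
    (p : Submodule K X) [FiniteDimensional K p] [FiniteDimensional K (X ⧸ p)] :
    FiniteDimensional K X := by
  refine Module.rank_lt_aleph0_iff.mp ?_
  rw [← Submodule.rank_quotient_add_rank p]
  exact Cardinal.add_lt_aleph0 (Module.rank_lt_aleph0 K _) (Module.rank_lt_aleph0 K _)

private lemma rel_index {K M N : Type*} [Field K] [AddCommGroup M] [Module K M]
    [AddCommGroup N] [Module K N] (f : M →ₗ[K] N) (M₀ : Submodule K M)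
    [FiniteDimensional K (M ⧸ M₀)]
    (hker : FiniteDimensional K (LinearMap.ker (f ∘ₗ M₀.subtype)))
    (hcoker : FiniteDimensional K (N ⧸ LinearMap.range (f ∘ₗ M₀.subtype))) :
    FiniteDimensional K (LinearMap.ker f) ∧ FiniteDimensional K (N ⧸ LinearMap.range f) ∧
    (finrank K (LinearMap.ker f) : ℤ) - finrank K (N ⧸ LinearMap.range f)
      = ((finrank K (LinearMap.ker (f ∘ₗ M₀.subtype)) : ℤ)
          - finrank K (N ⧸ LinearMap.range (f ∘ₗ M₀.subtype))) + finrank K (M ⧸ M₀) := by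
  set f₀ : M₀ →ₗ[K] N := f ∘ₗ M₀.subtype with hf₀
  set S : Submodule K N := LinearMap.range f₀ with hSdef
  have hM₀le : M₀ ≤ LinearMap.ker (S.mkQ ∘ₗ f) := by
    intro x hx
    simp only [LinearMap.mem_ker, LinearMap.comp_apply, Submodule.mkQ_apply,
      Submodule.Quotient.mk_eq_zero]
    exact ⟨⟨x, hx⟩, rfl⟩
  set g : (M ⧸ M₀) →ₗ[K] N ⧸ S := M₀.liftQ (S.mkQ ∘ₗ f) hM₀le with hg
  have hcomm : g ∘ₗ M₀.mkQ = S.mkQ ∘ₗ f := Submodule.liftQ_mkQ _ _ _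
  -- range of g
  have hrg : LinearMap.range g = Submodule.map S.mkQ (LinearMap.range f) := by
    rw [← LinearMap.range_comp_of_range_eq_top g (Submodule.range_mkQ M₀), hcomm,
      LinearMap.range_comp]
  -- kernel of S.mkQ ∘ f
  have hP : LinearMap.ker (S.mkQ ∘ₗ f) = LinearMap.ker f ⊔ M₀ := by
    refine le_antisymm ?_ (sup_le ?_ hM₀le)
    · intro x hx
      have hx' : f x ∈ S := by
        simpa [Submodule.Quotient.mk_eq_zero] using hx
      obtain ⟨y, hy⟩ := hx'
      refine Submodule.mem_sup.2 ⟨x - (y : M), ?_, (y : M), y.2, by abel⟩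
      have hy' : f (y : M) = f x := hy
      simp [LinearMap.mem_ker, map_sub, hy']
    · intro x hx
      have hx' : f x = 0 := hx
      simp [LinearMap.mem_ker, hx']
  have hkg : LinearMap.ker g = Submodule.map M₀.mkQ (LinearMap.ker f) := by
    have h1' : Submodule.comap M₀.mkQ (LinearMap.ker g) = LinearMap.ker f ⊔ M₀ := by
      rw [← LinearMap.ker_comp, hcomm, hP]
    have h2' : LinearMap.ker g = Submodule.map M₀.mkQ (LinearMap.ker f ⊔ M₀) := by
      rw [← h1', Submodule.map_comap_eq_of_surjective (Submodule.mkQ_surjective M₀)]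
    rw [h2', Submodule.map_sup, Submodule.mkQ_map_self, sup_bot_eq]
  -- the map q : ker f → M ⧸ M₀
  set q : (LinearMap.ker f) →ₗ[K] M ⧸ M₀ := M₀.mkQ ∘ₗ (LinearMap.ker f).subtype with hq
  have hkq : LinearMap.ker q = Submodule.comap (LinearMap.ker f).subtype M₀ := by
    rw [hq, LinearMap.ker_comp, Submodule.ker_mkQ]
  have hrq : LinearMap.range q = LinearMap.ker g := by
    rw [hq, LinearMap.range_comp, Submodule.range_subtype, hkg]
  -- equivalence ker f₀ ≃ ker q
  have hker0 : LinearMap.ker f₀ = Submodule.comap M₀.subtype (LinearMap.ker f) := by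
    rw [hf₀, LinearMap.ker_comp]
  have e1 : (LinearMap.ker f₀) ≃ₗ[K] (M₀ ⊓ LinearMap.ker f : Submodule K M) :=
    (Submodule.equivMapOfInjective M₀.subtype M₀.injective_subtype _).trans
      (LinearEquiv.ofEq _ _ (by rw [hker0, Submodule.map_comap_subtype]))
  have e2 : (LinearMap.ker q) ≃ₗ[K] (LinearMap.ker f ⊓ M₀ : Submodule K M) :=
    (Submodule.equivMapOfInjective (LinearMap.ker f).subtype
        (LinearMap.ker f).injective_subtype _).trans
      (LinearEquiv.ofEq _ _ (by rw [hkq, Submodule.map_comap_subtype]))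
  have e3 : (LinearMap.ker f₀) ≃ₗ[K] (LinearMap.ker q) :=
    e1.trans ((LinearEquiv.ofEq _ _ (inf_comm _ _)).trans e2.symm)
  haveI fdkq : FiniteDimensional K (LinearMap.ker q) := e3.finiteDimensional
  haveI fdrq : FiniteDimensional K (LinearMap.range q) := by
    rw [hrq]; infer_instance
  haveI fdquot : FiniteDimensional K ((LinearMap.ker f) ⧸ LinearMap.ker q) :=
    q.quotKerEquivRange.symm.finiteDimensional
  haveI fdkf : FiniteDimensional K (LinearMap.ker f) := fd_of_sub_quot (LinearMap.ker q)
  -- kernel dimension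
  have hdimker : finrank K (LinearMap.ker f)
      = finrank K (LinearMap.ker g) + finrank K (LinearMap.ker f₀) := by
    have h := Submodule.finrank_quotient_add_finrank (LinearMap.ker q)
    rw [q.quotKerEquivRange.finrank_eq, hrq] at h
    rw [← h, e3.finrank_eq]
  -- cokernel side
  have hSle : S ≤ LinearMap.range f := by
    rintro x ⟨y, rfl⟩
    exact ⟨(y : M), rfl⟩
  have e4 : ((N ⧸ S) ⧸ (LinearMap.range f).map S.mkQ) ≃ₗ[K] N ⧸ LinearMap.range f :=
    Submodule.quotientQuotientEquivQuotient S (LinearMap.range f) hSle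
  haveI fdW : FiniteDimensional K ((LinearMap.range f).map S.mkQ) := by
    rw [← hrg]; infer_instance
  haveI fdcok : FiniteDimensional K (N ⧸ LinearMap.range f) := e4.finiteDimensional
  -- cokernel dimension
  have hdimcok : finrank K (N ⧸ LinearMap.range f) + finrank K (LinearMap.range g)
      = finrank K (N ⧸ S) := by
    have h := Submodule.finrank_quotient_add_finrank ((LinearMap.range f).map S.mkQ)
    rw [e4.finrank_eq, ← hrg] at h
    exact h
  -- rank nullity for g
  have hrn : finrank K (LinearMap.range g) + finrank K (LinearMap.ker g)
      = finrank K (M ⧸ M₀) := LinearMap.finrank_range_add_finrank_ker g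
  refine ⟨fdkf, fdcok, ?_⟩
  have h1 := hdimker
  have h2 := hdimcok
  have h3 := hrn
  push_cast [hdimker]
  omega

set_option synthInstance.maxHeartbeats 1000000 in
set_option maxHeartbeats 1600000 in
/-- Relative index formula: if `𝒟_min ⊆ 𝒟 ⊆ 𝒟_max`, `dim 𝒟_max/𝒟_min < ∞`, and
`A_{𝒟_min}` is Fredholm (finite-dimensional kernel and cokernel, closed range), then
`A_𝒟` is Fredholm and `Ind A_𝒟 = Ind A_{𝒟_min} + dim 𝒟/𝒟_min`. -/
theorem stmt18 {H : Type*} [NormedAddCommGroup H] [InnerProductSpace ℂ H] [CompleteSpace H]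
    (Dmin D Dmax : Submodule ℂ H) (h1 : Dmin ≤ D) (h2 : D ≤ Dmax)
    (A : H →ₗ[ℂ] H)
    (hclosed : IsClosed {p : H × H | p.1 ∈ Dmax ∧ p.2 = A p.1})
    [FiniteDimensional ℂ (↥Dmax ⧸ Dmin.comap Dmax.subtype)]
    (hker : FiniteDimensional ℂ ↥(LinearMap.ker (A.domRestrict Dmin)))
    (hcoker : FiniteDimensional ℂ (H ⧸ LinearMap.range (A.domRestrict Dmin)))
    (hclosedrange : IsClosed ((LinearMap.range (A.domRestrict Dmin) : Submodule ℂ H) : Set H)) :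
    (FiniteDimensional ℂ ↥(LinearMap.ker (A.domRestrict D)) ∧
      FiniteDimensional ℂ (H ⧸ LinearMap.range (A.domRestrict D)) ∧
      IsClosed ((LinearMap.range (A.domRestrict D) : Submodule ℂ H) : Set H)) ∧
    (Module.finrank ℂ ↥(LinearMap.ker (A.domRestrict D)) : ℤ)
        - Module.finrank ℂ (H ⧸ LinearMap.range (A.domRestrict D))
      = ((Module.finrank ℂ ↥(LinearMap.ker (A.domRestrict Dmin)) : ℤ)
          - Module.finrank ℂ (H ⧸ LinearMap.range (A.domRestrict Dmin)))
        + Module.finrank ℂ (↥D ⧸ Dmin.comap D.subtype) := by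
  classical
  set M₀ : Submodule ℂ D := Dmin.comap D.subtype with hM₀
  set f : ↥D →ₗ[ℂ] H := A.domRestrict D with hf
  -- `D ⧸ M₀` is finite dimensional
  haveI hfdq : FiniteDimensional ℂ (↥D ⧸ M₀) := by
    set φ : ↥D →ₗ[ℂ] (↥Dmax ⧸ Dmin.comap Dmax.subtype) :=
      (Dmin.comap Dmax.subtype).mkQ ∘ₗ Submodule.inclusion h2 with hφ
    have hkerφ : LinearMap.ker φ = M₀ := by
      ext x
      simp only [hφ, LinearMap.mem_ker, LinearMap.comp_apply, Submodule.mkQ_apply,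
        Submodule.Quotient.mk_eq_zero, Submodule.mem_comap]
      exact Iff.rfl
    set ψ : (↥D ⧸ M₀) →ₗ[ℂ] (↥Dmax ⧸ Dmin.comap Dmax.subtype) :=
      M₀.liftQ φ hkerφ.ge with hψ
    have hinj : Function.Injective ψ := by
      rw [← LinearMap.ker_eq_bot]
      exact Submodule.ker_liftQ_eq_bot _ _ _ hkerφ.le
    exact FiniteDimensional.of_injective ψ hinj
  -- relate `f ∘ₗ M₀.subtype` with `A.domRestrict Dmin`
  set f₀ : ↥M₀ →ₗ[ℂ] H := f ∘ₗ M₀.subtype with hf₀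
  set e : ↥M₀ ≃ₗ[ℂ] ↥Dmin := Submodule.comapSubtypeEquivOfLe h1 with he
  have hcomp : f₀ = (A.domRestrict Dmin) ∘ₗ (e : ↥M₀ →ₗ[ℂ] ↥Dmin) := by
    ext x; rfl
  have hrange : LinearMap.range f₀ = LinearMap.range (A.domRestrict Dmin) := by
    rw [hcomp, LinearMap.range_comp_of_range_eq_top _ (LinearEquiv.range e)]
  have hkereq : LinearMap.ker f₀
      = Submodule.map (e.symm : ↥Dmin →ₗ[ℂ] ↥M₀) (LinearMap.ker (A.domRestrict Dmin)) := by
    rw [hcomp, LinearMap.ker_comp, Submodule.comap_equiv_eq_map_symm]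
  have eker : (LinearMap.ker (A.domRestrict Dmin)) ≃ₗ[ℂ] (LinearMap.ker f₀) :=
    (e.symm.submoduleMap _).trans (LinearEquiv.ofEq _ _ hkereq.symm)
  haveI hfk : FiniteDimensional ℂ (LinearMap.ker f₀) := eker.finiteDimensional
  haveI hfc : FiniteDimensional ℂ (H ⧸ LinearMap.range f₀) := by
    rw [hrange]; exact hcoker
  obtain ⟨fd1, fd2, hidx⟩ := rel_index f M₀ hfk hfc
  have hSle : LinearMap.range (A.domRestrict Dmin) ≤ LinearMap.range f := by
    rintro x ⟨y, rfl⟩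
    exact ⟨⟨(y : H), h1 y.2⟩, rfl⟩
  refine ⟨⟨fd1, fd2, ?_⟩, ?_⟩
  · -- closed range
    set S : Submodule ℂ H := LinearMap.range (A.domRestrict Dmin) with hS
    haveI : IsClosed (S : Set H) := hclosedrange
    haveI : FiniteDimensional ℂ (H ⧸ S) := hcoker
    set W : Submodule ℂ (H ⧸ S) := Submodule.map S.mkQ (LinearMap.range f) with hW
    have hWclosed : IsClosed (W : Set (H ⧸ S)) := Submodule.closed_of_finiteDimensional W
    have hcont : Continuous S.mkQ := by
      refine AddMonoidHomClass.continuous_of_bound S.mkQ 1 fun x => ?_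
      simpa [one_mul] using Submodule.Quotient.norm_mk_le S x
    have hpre : Submodule.comap S.mkQ W = LinearMap.range f := by
      rw [hW, Submodule.comap_map_eq, Submodule.ker_mkQ, sup_eq_left.2 hSle]
    have hpre' : (LinearMap.range f : Set H) = ⇑S.mkQ ⁻¹' (W : Set (H ⧸ S)) := by
      rw [← hpre]; rfl
    rw [hpre']
    exact hWclosed.preimage hcont
  · rw [hrange, ← hf₀] at hidx
    have hk : Module.finrank ℂ (LinearMap.ker f₀)
        = Module.finrank ℂ (LinearMap.ker (A.domRestrict Dmin)) :=
      eker.symm.finrank_eq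
    rw [hk] at hidx
    exact hidx
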